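/- Let U = {(x₁,x₂,x₃) ∈ ℝ³ : x₂ > x₁ > x₃}, and for x ∈ U set z(x) = √((x₁ − x₃)/(x₂ − x₃)) ∈ (0,1) and z'(x) = √(1 − z(x)²). Define K(k) = ∫₀^{π/2} (1 − k²sin²θ)^{−1/2} dθ and Eℓ(k) = ∫₀^{π/2} (1 − k²sin²θ)^{1/2} dθ, and the function f₂(x) = (x₃/√(x₂ − x₃))·K(z'(x)) + √(x₂ − x₃)·Eℓ(z'(x)). Then f₂ is differentiable on U and is a first integral of the Darboux–Halphen vector field X, i.e. X(f₂) = 0 at every point of U. -/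

import Mathlib

open Real in
/-- Complete elliptic integral of the first kind K(k). -/
noncomputable def Kell (k : ℝ) : ℝ :=
  ∫ θ in (0:ℝ)..(π / 2), 1 / Real.sqrt (1 - k ^ 2 * Real.sin θ ^ 2)

open Real in
/-- Complete elliptic integral of the second kind E(k). -/
noncomputable def Eell (k : ℝ) : ℝ :=
  ∫ θ in (0:ℝ)..(π / 2), Real.sqrt (1 - k ^ 2 * Real.sin θ ^ 2)

/-- Partial derivative ∂ᵢf at x of a function on ℝⁿ (modeled as `Fin n → ℝ`). -/
noncomputable def pd {n : ℕ} (f : (Fin n → ℝ) → ℝ) (i : Fin n) (x : Fin n → ℝ) : ℝ :=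
  fderiv ℝ f x (Pi.single i 1)

/-- Directional derivative Z(f) = Σⱼ Zⱼ ∂ⱼf of f along the vector field Z. -/
noncomputable def lieD {n : ℕ} (Z : Fin n → (Fin n → ℝ) → ℝ) (f : (Fin n → ℝ) → ℝ)
    (x : Fin n → ℝ) : ℝ :=
  ∑ j, Z j x * pd f j x

/-- The Darboux–Halphen vector field on ℝ³ (0-indexed coordinates). -/
noncomputable def DH : Fin 3 → (Fin 3 → ℝ) → ℝ :=
  ![fun x => x 1 * x 2 - x 0 * (x 1 + x 2),
    fun x => x 0 * x 2 - x 1 * (x 0 + x 2),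
    fun x => x 0 * x 1 - x 2 * (x 0 + x 1)]

/-- z(x) = √((x₁−x₃)/(x₂−x₃)). -/
noncomputable def zDH : (Fin 3 → ℝ) → ℝ := fun x =>
  Real.sqrt ((x 0 - x 2) / (x 1 - x 2))

/-- f₂ = x₃/√(x₂−x₃)·K(z′) + √(x₂−x₃)·E(z′), where z′ = √(1 − z²). -/
noncomputable def f2DH : (Fin 3 → ℝ) → ℝ := fun x =>
  x 2 / Real.sqrt (x 1 - x 2) * Kell (Real.sqrt (1 - zDH x ^ 2)) +
    Real.sqrt (x 1 - x 2) * Eell (Real.sqrt (1 - zDH x ^ 2))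

open Real MeasureTheory intervalIntegral

noncomputable def Pf (x : Fin 3 → ℝ) (θ : ℝ) : ℝ := x 0 * sin θ ^ 2 + x 1 * cos θ ^ 2
noncomputable def Qf (x : Fin 3 → ℝ) (θ : ℝ) : ℝ := Pf x θ - x 2
noncomputable def gf (x : Fin 3 → ℝ) (θ : ℝ) : ℝ := Pf x θ / Real.sqrt (Qf x θ)

noncomputable def prj (i : Fin 3) : (Fin 3 → ℝ) →L[ℝ] ℝ := ContinuousLinearMap.proj i

noncomputable def LPm (θ : ℝ) : (Fin 3 → ℝ) →L[ℝ] ℝ := sin θ ^ 2 • prj 0 + cos θ ^ 2 • prj 1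
noncomputable def LQm (θ : ℝ) : (Fin 3 → ℝ) →L[ℝ] ℝ := LPm θ - prj 2

noncomputable def DF (x : Fin 3 → ℝ) (θ : ℝ) : (Fin 3 → ℝ) →L[ℝ] ℝ :=
  (Real.sqrt (Qf x θ))⁻¹ • LPm θ - (Pf x θ / (2 * Qf x θ * Real.sqrt (Qf x θ))) • LQm θ

@[simp] lemma prj_apply (i : Fin 3) (v : Fin 3 → ℝ) : prj i v = v i := rfl

@[simp] lemma LPm_apply (θ : ℝ) (v : Fin 3 → ℝ) : LPm θ v = sin θ ^ 2 * v 0 + cos θ ^ 2 * v 1 := rfl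
@[simp] lemma LQm_apply (θ : ℝ) (v : Fin 3 → ℝ) :
    LQm θ v = sin θ ^ 2 * v 0 + cos θ ^ 2 * v 1 - v 2 := rfl

lemma Qf_pos {y : Fin 3 → ℝ} (h1 : y 0 ≤ y 1) (h2 : y 2 < y 0) (θ : ℝ) : y 0 - y 2 ≤ Qf y θ := by
  have h := sin_sq_add_cos_sq θ
  simp only [Qf, Pf]
  have key : y 0 * sin θ ^ 2 + y 1 * cos θ ^ 2 - y 2 - (y 0 - y 2) = (y 1 - y 0) * cos θ ^ 2 := by
    linear_combination y 0 * h
  nlinarith [mul_nonneg (sub_nonneg.2 h1) (sq_nonneg (Real.cos θ))]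

lemma hasFDerivAt_gf (x : Fin 3 → ℝ) (θ : ℝ) (hQ : 0 < Qf x θ) :
    HasFDerivAt (fun y => gf y θ) (DF x θ) x := by
  have hsq : Real.sqrt (Qf x θ) ^ 2 = Qf x θ := Real.sq_sqrt hQ.le
  have hs0 : 0 < Real.sqrt (Qf x θ) := Real.sqrt_pos.2 hQ
  have h0 : HasFDerivAt (fun y : Fin 3 → ℝ => y 0) (prj 0) x := (prj 0).hasFDerivAt
  have h1 : HasFDerivAt (fun y : Fin 3 → ℝ => y 1) (prj 1) x := (prj 1).hasFDerivAt
  have h2 : HasFDerivAt (fun y : Fin 3 → ℝ => y 2) (prj 2) x := (prj 2).hasFDerivAt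
  have hP : HasFDerivAt (fun y => Pf y θ) (LPm θ) x :=
    (h0.mul_const _).add (h1.mul_const _)
  have hQf : HasFDerivAt (fun y => Qf y θ) (LQm θ) x := hP.sub h2
  have hsqrt : HasFDerivAt (fun y => Real.sqrt (Qf y θ))
      ((1 / (2 * Real.sqrt (Qf x θ))) • LQm θ) x := hQf.sqrt hQ.ne'
  have hinv : HasFDerivAt (fun y => (Real.sqrt (Qf y θ))⁻¹)
      ((-(Real.sqrt (Qf x θ) ^ 2)⁻¹) • ((1 / (2 * Real.sqrt (Qf x θ))) • LQm θ)) x :=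
    (hasDerivAt_inv hs0.ne').comp_hasFDerivAt x hsqrt
  have key := hP.mul hinv
  have hfun : HasFDerivAt (fun y => gf y θ)
      (Pf x θ • ((-(Real.sqrt (Qf x θ) ^ 2)⁻¹) • ((1 / (2 * Real.sqrt (Qf x θ))) • LQm θ)) +
        (Real.sqrt (Qf x θ))⁻¹ • LPm θ) x := by
    simpa only [gf, div_eq_mul_inv, Pi.mul_def] using key
  convert hfun using 1
  ext v
  simp only [DF, ContinuousLinearMap.coe_sub', ContinuousLinearMap.coe_add',
    ContinuousLinearMap.coe_smul', Pi.sub_apply, Pi.add_apply, Pi.smul_apply, smul_eq_mul, hsq]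
  field_simp
  ring

lemma norm_prj_le (i : Fin 3) : ‖prj i‖ ≤ 1 :=
  ContinuousLinearMap.opNorm_le_bound _ zero_le_one fun v => by
    simpa using norm_le_pi_norm v i

lemma norm_LPm_le (θ : ℝ) : ‖LPm θ‖ ≤ 2 := by
  refine (norm_add_le _ _).trans ?_
  rw [norm_smul (sin θ ^ 2) (prj 0), norm_smul (cos θ ^ 2) (prj 1)]
  have h0 := norm_prj_le 0
  have h1 := norm_prj_le 1
  have hs : ‖sin θ ^ 2‖ ≤ 1 := by rw [Real.norm_eq_abs, abs_of_nonneg (sq_nonneg _)]; exact sin_sq_le_one θ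
  have hc : ‖cos θ ^ 2‖ ≤ 1 := by rw [Real.norm_eq_abs, abs_of_nonneg (sq_nonneg _)]; exact cos_sq_le_one θ
  nlinarith [norm_nonneg (prj (0:Fin 3)), norm_nonneg (prj (1:Fin 3)), norm_nonneg (sin θ^2), norm_nonneg (cos θ^2)]

lemma norm_LQm_le (θ : ℝ) : ‖LQm θ‖ ≤ 3 := by
  refine (norm_sub_le _ _).trans ?_
  have := norm_LPm_le θ
  have := norm_prj_le (2 : Fin 3)
  linarith

lemma norm_DF_le {x : Fin 3 → ℝ} {θ δ M : ℝ} (hδ : 0 < δ) (hQ : δ ≤ Qf x θ)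
    (hM : |Pf x θ| ≤ M) :
    ‖DF x θ‖ ≤ (Real.sqrt δ)⁻¹ * 2 + M / (2 * δ * Real.sqrt δ) * 3 := by
  have hQ0 : 0 < Qf x θ := hδ.trans_le hQ
  have hsδ : 0 < Real.sqrt δ := Real.sqrt_pos.2 hδ
  have hsQ : 0 < Real.sqrt (Qf x θ) := Real.sqrt_pos.2 hQ0
  have hss : Real.sqrt δ ≤ Real.sqrt (Qf x θ) := Real.sqrt_le_sqrt hQ
  have hM0 : 0 ≤ M := (abs_nonneg _).trans hM
  refine (norm_sub_le _ _).trans ?_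
  rw [norm_smul ((Real.sqrt (Qf x θ))⁻¹) (LPm θ),
    norm_smul (Pf x θ / (2 * Qf x θ * Real.sqrt (Qf x θ))) (LQm θ)]
  have e1 : ‖(Real.sqrt (Qf x θ))⁻¹‖ ≤ (Real.sqrt δ)⁻¹ := by
    rw [Real.norm_eq_abs, abs_of_nonneg (by positivity)]
    exact inv_anti₀ hsδ hss
  have e2 : ‖Pf x θ / (2 * Qf x θ * Real.sqrt (Qf x θ))‖ ≤ M / (2 * δ * Real.sqrt δ) := by
    rw [Real.norm_eq_abs, abs_div, abs_of_nonneg (by positivity : (0:ℝ) ≤ 2 * Qf x θ * Real.sqrt (Qf x θ))]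
    apply div_le_div₀ hM0 hM (by positivity)
    nlinarith
  have b1 := norm_LPm_le θ
  have b2 := norm_LQm_le θ
  have n1 : (0:ℝ) ≤ ‖(Real.sqrt (Qf x θ))⁻¹‖ := norm_nonneg _
  have n2 : (0:ℝ) ≤ ‖Pf x θ / (2 * Qf x θ * Real.sqrt (Qf x θ))‖ := norm_nonneg _
  nlinarith [norm_nonneg (LPm θ), norm_nonneg (LQm θ)]

lemma continuous_Pf (y : Fin 3 → ℝ) : Continuous (Pf y) := by unfold Pf; fun_prop

lemma continuous_Qf (y : Fin 3 → ℝ) : Continuous (Qf y) := by unfold Qf Pf; fun_prop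

lemma continuous_gf (y : Fin 3 → ℝ) (hy : ∀ θ, 0 < Qf y θ) : Continuous (gf y) := by
  apply (continuous_Pf y).div ((continuous_Qf y).sqrt)
  exact fun θ => (Real.sqrt_pos.2 (hy θ)).ne'

lemma continuous_LPm : Continuous LPm := by
  apply Continuous.add
  · exact (Real.continuous_sin.pow 2).smul continuous_const
  · exact (Real.continuous_cos.pow 2).smul continuous_const

lemma continuous_DF (x : Fin 3 → ℝ) (hx : ∀ θ, 0 < Qf x θ) : Continuous (DF x) := by
  have hsq : Continuous fun θ => Real.sqrt (Qf x θ) := (continuous_Qf x).sqrt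
  have hne : ∀ θ, Real.sqrt (Qf x θ) ≠ 0 := fun θ => (Real.sqrt_pos.2 (hx θ)).ne'
  have hLQ : Continuous LQm := continuous_LPm.sub continuous_const
  apply Continuous.sub
  · exact (hsq.inv₀ hne).smul continuous_LPm
  · refine Continuous.fun_smul ?_ hLQ
    exact (continuous_Pf x).div
      ((continuous_const.mul (continuous_Qf x)).mul hsq) (fun θ => by
      have := hx θ; have := Real.sqrt_pos.2 (hx θ); positivity)

lemma ball_facts {x y : Fin 3 → ℝ} {ε : ℝ}
    (hε : ε = min ((x 1 - x 0) / 2) ((x 0 - x 2) / 4))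
    (h1 : x 0 < x 1) (h2 : x 2 < x 0) (hy : y ∈ Metric.ball x ε) :
    y 0 ≤ y 1 ∧ (x 0 - x 2) / 2 ≤ y 0 - y 2 ∧
      ∀ θ, |Pf y θ| ≤ |x 0| + |x 1| + 2 * ε := by
  have hd : ∀ i, |y i - x i| < ε := fun i => by
    calc |y i - x i| = dist (y i) (x i) := by rw [Real.dist_eq]
    _ ≤ dist y x := dist_le_pi_dist y x i
    _ < ε := hy
  have hd0 := hd 0; have hd1 := hd 1; have hd2 := hd 2
  have hε1 : ε ≤ (x 1 - x 0) / 2 := hε ▸ min_le_left _ _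
  have hε2 : ε ≤ (x 0 - x 2) / 4 := hε ▸ min_le_right _ _
  have a0 := abs_lt.1 hd0
  have a1 := abs_lt.1 hd1
  have a2 := abs_lt.1 hd2
  refine ⟨by linarith [a0.1, a0.2, a1.1, a1.2], by linarith [a0.1, a2.2], fun θ => ?_⟩
  have hs : Real.sin θ ^ 2 + Real.cos θ ^ 2 = 1 := sin_sq_add_cos_sq θ
  have b0 : |y 0| ≤ |x 0| + ε := by
    have h := abs_sub_abs_le_abs_sub (y 0) (x 0); linarith
  have b1 : |y 1| ≤ |x 1| + ε := by
    have h := abs_sub_abs_le_abs_sub (y 1) (x 1); linarith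
  calc |Pf y θ| ≤ |y 0 * Real.sin θ ^ 2| + |y 1 * Real.cos θ ^ 2| := abs_add_le _ _
  _ = |y 0| * Real.sin θ ^ 2 + |y 1| * Real.cos θ ^ 2 := by
      rw [abs_mul, abs_mul, abs_of_nonneg (sq_nonneg (Real.sin θ)),
        abs_of_nonneg (sq_nonneg (Real.cos θ))]
  _ ≤ |y 0| + |y 1| := by
      nlinarith [abs_nonneg (y 0), abs_nonneg (y 1), sq_nonneg (Real.sin θ), sq_nonneg (Real.cos θ),
        mul_nonneg (abs_nonneg (y 0)) (sq_nonneg (Real.cos θ)),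
        mul_nonneg (abs_nonneg (y 1)) (sq_nonneg (Real.sin θ))]
  _ ≤ |x 0| + |x 1| + 2 * ε := by linarith

lemma hasFDerivAt_intF {x : Fin 3 → ℝ} (h1 : x 0 < x 1) (h2 : x 2 < x 0) :
    HasFDerivAt (fun y => ∫ θ in (0:ℝ)..(π / 2), gf y θ)
      (∫ θ in (0:ℝ)..(π / 2), DF x θ) x := by
  set ε := min ((x 1 - x 0) / 2) ((x 0 - x 2) / 4) with hε
  have hε_pos : 0 < ε := by
    apply lt_min <;> linarith
  set δ := (x 0 - x 2) / 2 with hδ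
  have hδ_pos : 0 < δ := by simp only [hδ]; linarith
  set M := |x 0| + |x 1| + 2 * ε with hM
  set C := (Real.sqrt δ)⁻¹ * 2 + M / (2 * δ * Real.sqrt δ) * 3 with hC
  have hQx : ∀ θ, 0 < Qf x θ := fun θ =>
    lt_of_lt_of_le (by linarith) (Qf_pos h1.le h2 θ)
  have key : ∀ y ∈ Metric.ball x ε, ∀ θ : ℝ, (0 < Qf y θ) ∧ δ ≤ Qf y θ ∧ ‖DF y θ‖ ≤ C := by
    intro y hy θ
    obtain ⟨hy01, hyδ, hyP⟩ := ball_facts hε h1 h2 hy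
    have hQ : δ ≤ Qf y θ := le_trans hyδ (Qf_pos hy01 (by linarith) θ)
    exact ⟨hδ_pos.trans_le hQ, hQ, norm_DF_le hδ_pos hQ (hyP θ)⟩
  apply intervalIntegral.hasFDerivAt_integral_of_dominated_of_fderiv_le
    (F := fun y θ => gf y θ) (F' := DF) (bound := fun _ => C) (Metric.ball_mem_nhds x hε_pos)
  · filter_upwards [Metric.ball_mem_nhds x hε_pos] with y hy
    exact ((continuous_gf y (fun θ => (key y hy θ).1)).aestronglyMeasurable).restrict
  · exact (continuous_gf x hQx).intervalIntegrable _ _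
  · exact ((continuous_DF x hQx).aestronglyMeasurable).restrict
  · filter_upwards with θ _ y hy
    exact (key y hy θ).2.2
  · exact intervalIntegrable_const
  · filter_upwards with θ _ y hy
    exact hasFDerivAt_gf y θ (key y hy θ).1


lemma one_sub_k_sq {y : Fin 3 → ℝ} (h1 : y 0 < y 1) (h2 : y 2 < y 0) (θ : ℝ) :
    1 - Real.sqrt (1 - zDH y ^ 2) ^ 2 * Real.sin θ ^ 2 = Qf y θ / (y 1 - y 2) := by
  have hbc : 0 < y 1 - y 2 := by linarith
  have hz : zDH y ^ 2 = (y 0 - y 2) / (y 1 - y 2) := by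
    rw [zDH, Real.sq_sqrt (div_nonneg (by linarith) (by linarith))]
  have hz1 : zDH y ^ 2 ≤ 1 := by
    rw [hz, div_le_one hbc]; linarith
  rw [Real.sq_sqrt (by linarith), hz]
  have hs : Real.sin θ ^ 2 + Real.cos θ ^ 2 = 1 := Real.sin_sq_add_cos_sq θ
  field_simp [Qf, Pf]
  unfold Qf Pf
  linear_combination (-(y 1)) * hs

lemma f2DH_eq_intF {y : Fin 3 → ℝ} (h1 : y 0 < y 1) (h2 : y 2 < y 0) :
    f2DH y = ∫ θ in (0:ℝ)..(π / 2), gf y θ := by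
  have hbc : 0 < y 1 - y 2 := by linarith
  have hsbc : 0 < Real.sqrt (y 1 - y 2) := Real.sqrt_pos.2 hbc
  have hQ : ∀ θ, 0 < Qf y θ := fun θ => lt_of_lt_of_le (by linarith) (Qf_pos h1.le h2 θ)
  have hpt : ∀ θ : ℝ,
      y 2 / Real.sqrt (y 1 - y 2) * (1 / Real.sqrt (1 - Real.sqrt (1 - zDH y ^ 2) ^ 2 * Real.sin θ ^ 2))
        + Real.sqrt (y 1 - y 2) * Real.sqrt (1 - Real.sqrt (1 - zDH y ^ 2) ^ 2 * Real.sin θ ^ 2)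
        = gf y θ := by
    intro θ
    have hQθ := hQ θ
    have hsQ : 0 < Real.sqrt (Qf y θ) := Real.sqrt_pos.2 hQθ
    rw [one_sub_k_sq h1 h2 θ, Real.sqrt_div hQθ.le]
    rw [gf]
    have hPQ : Pf y θ = Qf y θ + y 2 := by rw [Qf]; ring
    rw [hPQ]
    field_simp
    ring_nf
    rw [Real.sq_sqrt hQθ.le]
  have c1 : Continuous fun θ => 1 / Real.sqrt (1 - Real.sqrt (1 - zDH y ^ 2) ^ 2 * Real.sin θ ^ 2) := by
    have : ∀ θ : ℝ, (1 - Real.sqrt (1 - zDH y ^ 2) ^ 2 * Real.sin θ ^ 2) = Qf y θ / (y 1 - y 2) :=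
      one_sub_k_sq h1 h2
    simp only [this]
    refine continuous_const.div (Real.continuous_sqrt.comp ((continuous_Qf y).div_const _)) ?_
    intro θ
    have : 0 < Qf y θ / (y 1 - y 2) := div_pos (hQ θ) hbc
    positivity
  have c2 : Continuous fun θ => Real.sqrt (1 - Real.sqrt (1 - zDH y ^ 2) ^ 2 * Real.sin θ ^ 2) := by
    fun_prop
  rw [f2DH, Kell, Eell]
  rw [← intervalIntegral.integral_const_mul, ← intervalIntegral.integral_const_mul,
    ← intervalIntegral.integral_add ((c1.intervalIntegrable _ _).const_mul _)
      ((c2.intervalIntegrable _ _).const_mul _)]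
  exact intervalIntegral.integral_congr fun θ _ => hpt θ

noncomputable def hFun (x : Fin 3 → ℝ) (θ : ℝ) : ℝ :=
  -(x 2) * (x 1 - x 0) * (Real.sin θ * Real.cos θ) / Real.sqrt (Qf x θ)

lemma hasDerivAt_hFun (x : Fin 3 → ℝ) (h1 : x 0 < x 1) (h2 : x 2 < x 0) (θ : ℝ) :
    HasDerivAt (hFun x) ((DF x θ) (fun j => DH j x)) θ := by
  have hQ : 0 < Qf x θ := lt_of_lt_of_le (by linarith) (Qf_pos h1.le h2 θ)
  have hsQ : 0 < Real.sqrt (Qf x θ) := Real.sqrt_pos.2 hQ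
  have hr : Real.sqrt (Qf x θ) ^ 2 = Qf x θ := Real.sq_sqrt hQ.le
  have hsin := Real.hasDerivAt_sin θ
  have hcos := Real.hasDerivAt_cos θ
  have hQd : HasDerivAt (fun t => Qf x t)
      (x 0 * ((2:ℕ) * Real.sin θ ^ 1 * Real.cos θ) + x 1 * ((2:ℕ) * Real.cos θ ^ 1 * (-Real.sin θ))) θ := by
    have hs2 := hsin.pow 2
    have hc2 := hcos.pow 2
    simpa [Qf, Pf] using ((hs2.const_mul (x 0)).add (hc2.const_mul (x 1))).sub_const (x 2)
  have hsqrtd := hQd.sqrt hQ.ne'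
  have hN : HasDerivAt (fun t => -(x 2) * (x 1 - x 0) * (Real.sin t * Real.cos t))
      (-(x 2) * (x 1 - x 0) * (Real.cos θ * Real.cos θ + Real.sin θ * (-Real.sin θ))) θ :=
    (hsin.mul hcos).const_mul _
  have hdiv : HasDerivAt (hFun x) _ θ := hN.div hsqrtd hsQ.ne'
  convert hdiv using 1
  have hs : Real.sin θ ^ 2 + Real.cos θ ^ 2 = 1 := Real.sin_sq_add_cos_sq θ
  simp only [DF, ContinuousLinearMap.coe_sub', Pi.sub_apply, ContinuousLinearMap.coe_smul',
    Pi.smul_apply, LPm_apply, LQm_apply, smul_eq_mul, DH, Matrix.cons_val_zero,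
    Matrix.cons_val_one, Matrix.head_cons, Matrix.cons_val_two, Matrix.tail_cons]
  have alg : ∀ (r q P A B N N' Q' : ℝ), r ≠ 0 → q ≠ 0 → r ^ 2 = q →
      2 * q * A - P * B - 2 * q * N' + N * Q' = 0 →
      r⁻¹ * A - P / (2 * q * r) * B = (N' * r - N * (Q' / (2 * r))) / r ^ 2 := by
    intro r q P A B N N' Q' hr0 hq0 hrq h
    subst hrq
    have e1 : r⁻¹ * A - P / (2 * r ^ 2 * r) * B = (2 * r ^ 2 * A - P * B) / (2 * r ^ 3) := by
      field_simp
    have e2 : (N' * r - N * (Q' / (2 * r))) / r ^ 2 = (2 * r ^ 2 * N' - N * Q') / (2 * r ^ 3) := by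
      field_simp
    rw [e1, e2]
    congr 1
    linear_combination h
  refine alg _ _ _ _ _ _ _ _ hsQ.ne' hQ.ne' hr ?_
  have poly : ∀ a b d S C : ℝ, S + C = 1 →
      2 * (a * S + b * C - d) * (S * (b * d - a * (b + d)) + C * (a * d - b * (a + d)))
        - (a * S + b * C) * (S * (b * d - a * (b + d)) + C * (a * d - b * (a + d)) - (a * b - d * (a + b)))
        - 2 * (a * S + b * C - d) * (-d * (b - a) * (C - S))
        + (-d * (b - a)) * (2 * a - 2 * b) * (S * C) = 0 := by
    intro a b d S C h
    obtain rfl : C = 1 - S := by linarith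
    ring
  simp only [Qf, Pf]
  linear_combination poly (x 0) (x 1) (x 2) (Real.sin θ ^ 2) (Real.cos θ ^ 2) hs



lemma eventually_U {x : Fin 3 → ℝ} (h1 : x 0 < x 1) (h2 : x 2 < x 0) :
    ∀ᶠ y in nhds x, y 0 < y 1 ∧ y 2 < y 0 := by
  have hopen : IsOpen {y : Fin 3 → ℝ | y 0 < y 1 ∧ y 2 < y 0} :=
    (isOpen_lt (continuous_apply 0) (continuous_apply 1)).inter
      (isOpen_lt (continuous_apply 2) (continuous_apply 0))
  exact hopen.mem_nhds ⟨h1, h2⟩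

lemma hasFDerivAt_f2DH {x : Fin 3 → ℝ} (h1 : x 0 < x 1) (h2 : x 2 < x 0) :
    HasFDerivAt f2DH (∫ θ in (0:ℝ)..(π / 2), DF x θ) x := by
  refine (hasFDerivAt_intF h1 h2).congr_of_eventuallyEq ?_
  filter_upwards [eventually_U h1 h2] with y hy
  exact f2DH_eq_intF hy.1 hy.2

/-- On U = {x₂ > x₁ > x₃}, f₂ is differentiable and is a first integral of the
Darboux–Halphen vector field: X(f₂) = 0. -/
theorem f2_first_integral (x : Fin 3 → ℝ) (h1 : x 1 > x 0) (h2 : x 0 > x 2) :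
    DifferentiableAt ℝ f2DH x ∧ lieD DH f2DH x = 0 := by
  have hF := hasFDerivAt_f2DH h1 h2
  refine ⟨hF.differentiableAt, ?_⟩
  have hQx : ∀ θ, 0 < Qf x θ := fun θ =>
    lt_of_lt_of_le (by linarith) (Qf_pos h1.le h2 θ)
  set L := ∫ θ in (0:ℝ)..(π / 2), DF x θ with hL
  have hfd : fderiv ℝ f2DH x = L := hF.fderiv
  set v : Fin 3 → ℝ := fun j => DH j x with hv
  have hDFint : IntervalIntegrable (DF x) MeasureTheory.volume 0 (π / 2) :=
    (continuous_DF x hQx).intervalIntegrable _ _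
  have step1 : lieD DH f2DH x = L v := by
    simp only [lieD, pd, hfd]
    have : v = ∑ j : Fin 3, DH j x • (Pi.single j 1 : Fin 3 → ℝ) := by
      have e : ∀ j : Fin 3, DH j x • (Pi.single j 1 : Fin 3 → ℝ) = Pi.single j (DH j x) := by
        intro j
        rw [← Pi.single_smul, smul_eq_mul, mul_one]
      rw [funext e, Finset.univ_sum_single]
    rw [this, map_sum]
    congr 1
    funext j
    rw [_root_.map_smul, smul_eq_mul]
  have step2 : L v = ∫ θ in (0:ℝ)..(π / 2), (DF x θ) v :=
    ContinuousLinearMap.intervalIntegral_apply hDFint v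
  have cont : Continuous fun θ => (DF x θ) v :=
    ((ContinuousLinearMap.apply ℝ ℝ v).continuous).comp (continuous_DF x hQx)
  have step3 : (∫ θ in (0:ℝ)..(π / 2), (DF x θ) v) = hFun x (π / 2) - hFun x 0 := by
    apply intervalIntegral.integral_eq_sub_of_hasDerivAt
    · exact fun t _ => hasDerivAt_hFun x h1 h2 t
    · exact cont.intervalIntegrable _ _
  rw [step1, step2, step3, hFun, hFun]
  simp
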